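/- The size of the generic consistent formula is polynomial in the sample size: for a sample (P, N) of ultimately periodic words stored as pairs (u,v) with total size |S| = Σ_{uv^ω ∈ P∪N} |uv|, there exists an LTL formula consistent with (P,N) whose number of distinct subformulas is O(|S|⁴). -/

import Mathlib

def suffixW {A : Type*} (w : ℕ → A) (k : ℕ) : ℕ → A := fun n => w (n + k)

def upWord {A : Type*} (u v : List A) (hv : v ≠ []) : ℕ → A := fun n =>
  if h : n < u.length then u.get ⟨n, h⟩
  else v.get ⟨(n - u.length) % v.length, Nat.mod_lt _ (List.length_pos_iff.mpr hv)⟩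

inductive LTL (P : Type*) where
  | atom : P → LTL P
  | neg : LTL P → LTL P
  | disj : LTL P → LTL P → LTL P
  | next : LTL P → LTL P
  | untl : LTL P → LTL P → LTL P
  deriving DecidableEq

/-- Satisfaction over words whose letters are subsets of AP, encoded as finsets. -/
def sat {P : Type*} : LTL P → (ℕ → Finset P) → Prop
  | .atom p, w => p ∈ w 0
  | .neg φ, w => ¬ sat φ w
  | .disj φ ψ, w => sat φ w ∨ sat ψ w
  | .next φ, w => sat φ (suffixW w 1)
  | .untl φ ψ, w => ∃ i, sat ψ (suffixW w i) ∧ ∀ j < i, sat φ (suffixW w j)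

/-- The set of (distinct) subformulas of an LTL formula. -/
def subf {P : Type*} [DecidableEq P] : LTL P → Finset (LTL P)
  | .atom p => {.atom p}
  | .neg φ => insert (.neg φ) (subf φ)
  | .disj φ ψ => insert (.disj φ ψ) (subf φ ∪ subf ψ)
  | .next φ => insert (.next φ) (subf φ)
  | .untl φ ψ => insert (.untl φ ψ) (subf φ ∪ subf ψ)

/-- The size of an LTL formula: the number of nodes of its syntax DAG,
i.e. the number of its distinct subformulas. -/
def sizeD {P : Type*} [DecidableEq P] (φ : LTL P) : ℕ := (subf φ).card
-- auxiliary development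

section Aux

variable {P : Type*}

/-- Iterated next. -/
def nextPow : ℕ → LTL P → LTL P
  | 0, φ => φ
  | k+1, φ => .next (nextPow k φ)

/-- A tautology. -/
noncomputable def ttF (P : Type*) [Nonempty P] : LTL P :=
  .disj (.atom (Classical.arbitrary P)) (.neg (.atom (Classical.arbitrary P)))

/-- An unsatisfiable formula. -/
noncomputable def ffF (P : Type*) [Nonempty P] : LTL P := .neg (ttF P)

/-- Conjunction, encoded. -/
def conjF (a b : LTL P) : LTL P := .neg (.disj (.neg a) (.neg b))

noncomputable def disjList (P : Type*) [Nonempty P] : List (LTL P) → LTL P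
  | [] => ffF P
  | x :: xs => .disj x (disjList P xs)

noncomputable def conjList (P : Type*) [Nonempty P] : List (LTL P) → LTL P
  | [] => ttF P
  | x :: xs => conjF x (conjList P xs)

lemma sat_tt [Nonempty P] (w : ℕ → Finset P) : sat (ttF P) w := by
  simp only [ttF, sat]; tauto

lemma sat_ff [Nonempty P] (w : ℕ → Finset P) : ¬ sat (ffF P) w := by
  simp only [ffF, ttF, sat]; tauto

lemma sat_conjF (a b : LTL P) (w : ℕ → Finset P) :
    sat (conjF a b) w ↔ sat a w ∧ sat b w := by
  simp only [conjF, sat]; tauto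

lemma sat_disjList [Nonempty P] (l : List (LTL P)) (w : ℕ → Finset P) :
    sat (disjList P l) w ↔ ∃ φ ∈ l, sat φ w := by
  induction l with
  | nil => simp [disjList, sat_ff]
  | cons x xs ih => simp only [disjList, sat, ih]; simp

lemma sat_conjList [Nonempty P] (l : List (LTL P)) (w : ℕ → Finset P) :
    sat (conjList P l) w ↔ ∀ φ ∈ l, sat φ w := by
  induction l with
  | nil => simp [conjList, sat_tt]
  | cons x xs ih => simp only [conjList, sat_conjF, ih]; simp

lemma suffixW_suffixW {A : Type*} (w : ℕ → A) (k m : ℕ) :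
    suffixW (suffixW w m) k = suffixW w (k + m) := by
  funext n; simp [suffixW]; ring_nf

lemma sat_nextPow (k : ℕ) (φ : LTL P) (w : ℕ → Finset P) :
    sat (nextPow k φ) w ↔ sat φ (suffixW w k) := by
  induction k generalizing w with
  | zero =>
    have : suffixW w 0 = w := by funext n; simp [suffixW]
    rw [nextPow, this]
  | succ k ih =>
    show sat (.next (nextPow k φ)) w ↔ _
    simp only [sat, ih, suffixW_suffixW]

-- size lemmas
variable [DecidableEq P]

lemma sizeD_atom (p : P) : sizeD (.atom p : LTL P) = 1 := by simp [sizeD, subf]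

lemma sizeD_neg_le (φ : LTL P) : sizeD (.neg φ) ≤ sizeD φ + 1 := by
  simpa [sizeD, subf] using Finset.card_insert_le _ _

lemma sizeD_next_le (φ : LTL P) : sizeD (.next φ) ≤ sizeD φ + 1 := by
  simpa [sizeD, subf] using Finset.card_insert_le _ _

lemma sizeD_disj_le (φ ψ : LTL P) : sizeD (.disj φ ψ) ≤ sizeD φ + sizeD ψ + 1 := by
  calc (subf (.disj φ ψ)).card ≤ (subf φ ∪ subf ψ).card + 1 := by
        simpa [subf] using Finset.card_insert_le _ _
    _ ≤ sizeD φ + sizeD ψ + 1 := by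
        have := Finset.card_union_le (subf φ) (subf ψ); unfold sizeD; omega

lemma sizeD_conjF_le (a b : LTL P) : sizeD (conjF a b) ≤ sizeD a + sizeD b + 4 := by
  unfold conjF
  have h1 := sizeD_neg_le (LTL.disj (LTL.neg a) (LTL.neg b))
  have h2 := sizeD_disj_le (LTL.neg a) (LTL.neg b)
  have h3 := sizeD_neg_le a
  have h4 := sizeD_neg_le b
  omega

lemma sizeD_tt [Nonempty P] : sizeD (ttF P) ≤ 4 := by
  unfold ttF
  have h1 := sizeD_disj_le (LTL.atom (Classical.arbitrary P)) (LTL.neg (.atom (Classical.arbitrary P)))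
  have h2 := sizeD_neg_le (LTL.atom (Classical.arbitrary P) : LTL P)
  have h3 := sizeD_atom (Classical.arbitrary P)
  omega

lemma sizeD_ff [Nonempty P] : sizeD (ffF P) ≤ 5 := by
  have := sizeD_neg_le (ttF P)
  have := sizeD_tt (P := P)
  unfold ffF; omega

lemma sizeD_nextPow_le (k : ℕ) (φ : LTL P) : sizeD (nextPow k φ) ≤ sizeD φ + k := by
  induction k with
  | zero => simp [nextPow]
  | succ k ih =>
    have := sizeD_next_le (nextPow k φ)
    show sizeD (.next (nextPow k φ)) ≤ _
    omega

lemma sizeD_disjList_le [Nonempty P] (l : List (LTL P)) :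
    sizeD (disjList P l) ≤ 5 + (l.map (fun φ => sizeD φ + 1)).sum := by
  induction l with
  | nil => simpa [disjList] using sizeD_ff (P := P)
  | cons x xs ih =>
    have := sizeD_disj_le x (disjList P xs)
    simp only [List.map_cons, List.sum_cons]
    show sizeD (.disj x (disjList P xs)) ≤ _
    omega

lemma sizeD_conjList_le [Nonempty P] (l : List (LTL P)) :
    sizeD (conjList P l) ≤ 5 + (l.map (fun φ => sizeD φ + 4)).sum := by
  induction l with
  | nil => simp only [conjList, List.map_nil, List.sum_nil]; exact le_trans sizeD_tt (by omega)
  | cons x xs ih =>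
    have := sizeD_conjF_le x (conjList P xs)
    simp only [List.map_cons, List.sum_cons]
    show sizeD (conjF x (conjList P xs)) ≤ _
    omega

end Aux

section Words

variable {A : Type*}

lemma upWord_period (u v : List A) (hv : v ≠ []) (n m : ℕ) (hn : u.length ≤ n) :
    upWord u v hv (n + m * v.length) = upWord u v hv n := by
  unfold upWord
  rw [dif_neg (by omega), dif_neg (by omega)]
  congr 1
  apply Fin.ext
  show (n + m * v.length - u.length) % v.length = (n - u.length) % v.length
  have h1 : n + m * v.length - u.length = (n - u.length) + m * v.length := by omega
  rw [h1, Nat.add_mul_mod_self_right]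

lemma upWord_eq_of_agree (u1 v1 u2 v2 : List A) (h1 : v1 ≠ []) (h2 : v2 ≠ [])
    (h : ∀ k < u1.length + u2.length + v1.length * v2.length,
      upWord u1 v1 h1 k = upWord u2 v2 h2 k) :
    upWord u1 v1 h1 = upWord u2 v2 h2 := by
  have hv1 : 0 < v1.length := List.length_pos_iff.mpr h1
  have hv2 : 0 < v2.length := List.length_pos_iff.mpr h2
  set B := u1.length + u2.length + v1.length * v2.length with hB
  set L := v1.length * v2.length with hL
  have hLpos : 0 < L := Nat.mul_pos hv1 hv2
  funext n
  induction n using Nat.strong_induction_on with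
  | _ n ih =>
    by_cases hn : n < B
    · exact h n hn
    · push_neg at hn
      have hnL : L ≤ n := by omega
      have e1 : upWord u1 v1 h1 n = upWord u1 v1 h1 (n - L) := by
        conv_lhs => rw [show n = (n - L) + v2.length * v1.length by rw [mul_comm]; omega]
        exact upWord_period _ _ _ _ _ (by omega)
      have e2 : upWord u2 v2 h2 n = upWord u2 v2 h2 (n - L) := by
        conv_lhs => rw [show n = (n - L) + v1.length * v2.length by omega]
        exact upWord_period _ _ _ _ _ (by omega)
      rw [e1, e2, ih (n - L) (by omega)]

lemma exists_diff (u1 v1 u2 v2 : List A) (h1 : v1 ≠ []) (h2 : v2 ≠ [])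
    (hne : upWord u1 v1 h1 ≠ upWord u2 v2 h2) :
    ∃ k < u1.length + u2.length + v1.length * v2.length,
      upWord u1 v1 h1 k ≠ upWord u2 v2 h2 k := by
  by_contra hc
  push_neg at hc
  exact hne (upWord_eq_of_agree u1 v1 u2 v2 h1 h2 hc)

end Words

/-- A distinguishing formula for two distinct ultimately periodic words. -/
lemma exists_distinguisher {AP : Type*} [DecidableEq AP]
    (u1 v1 u2 v2 : List (Finset AP)) (h1 : v1 ≠ []) (h2 : v2 ≠ [])
    (hne : upWord u1 v1 h1 ≠ upWord u2 v2 h2) :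
    ∃ φ : LTL AP, sat φ (upWord u1 v1 h1) ∧ ¬ sat φ (upWord u2 v2 h2) ∧
      sizeD φ ≤ u1.length + u2.length + v1.length * v2.length + 2 := by
  obtain ⟨k, hkB, hk⟩ := exists_diff u1 v1 u2 v2 h1 h2 hne
  rw [Ne, Finset.ext_iff] at hk
  push_neg at hk
  obtain ⟨a, ha⟩ := hk
  have hsuf1 : ∀ (w : ℕ → Finset AP), suffixW w k 0 = w k := by
    intro w; simp [suffixW]
  by_cases hmem : a ∈ upWord u1 v1 h1 k
  · have hnm : a ∉ upWord u2 v2 h2 k := by tauto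
    refine ⟨nextPow k (.atom a), ?_, ?_, ?_⟩
    · rw [sat_nextPow]; show a ∈ _; rw [hsuf1]; exact hmem
    · rw [sat_nextPow]; show ¬ (a ∈ _); rw [hsuf1]; exact hnm
    · have := sizeD_nextPow_le k (.atom a : LTL AP)
      rw [sizeD_atom] at this; omega
  · have hm2 : a ∈ upWord u2 v2 h2 k := by tauto
    refine ⟨nextPow k (.neg (.atom a)), ?_, ?_, ?_⟩
    · rw [sat_nextPow]; show ¬ (a ∈ _); rw [hsuf1]; exact hmem
    · rw [sat_nextPow]; simp only [sat, not_not]; show a ∈ _; rw [hsuf1]; exact hm2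
    · have h3 := sizeD_nextPow_le k (.neg (.atom a) : LTL AP)
      have h4 := sizeD_neg_le (.atom a : LTL AP)
      rw [sizeD_atom] at h4; omega
theorem generic_formula_size {AP : Type*} [Fintype AP] [DecidableEq AP] [Nonempty AP] :
    ∃ C : ℕ, ∀ Pos Neg : Finset (List (Finset AP) × List (Finset AP)),
      (∀ p ∈ Pos ∪ Neg, p.2 ≠ []) →
      (∀ p ∈ Pos, ∀ q ∈ Neg, ∀ (hp : p.2 ≠ []) (hq : q.2 ≠ []),
        upWord p.1 p.2 hp ≠ upWord q.1 q.2 hq) →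
      ∃ φ : LTL AP,
        (∀ p ∈ Pos, ∀ hp : p.2 ≠ [], sat φ (upWord p.1 p.2 hp)) ∧
        (∀ q ∈ Neg, ∀ hq : q.2 ≠ [], ¬ sat φ (upWord q.1 q.2 hq)) ∧
        sizeD φ ≤ C * ((Pos ∪ Neg).sum fun p => p.1.length + p.2.length) ^ 4 + C := by
  classical
  refine ⟨15, ?_⟩
  intro Pos Neg hnn hsep
  set S := (Pos ∪ Neg).sum fun p => p.1.length + p.2.length with hS
  have hterm : ∀ r ∈ Pos ∪ Neg, r.1.length + r.2.length ≤ S :=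
    fun r hr => Finset.single_le_sum (f := fun p => p.1.length + p.2.length)
      (fun i _ => Nat.zero_le _) hr
  have key : ∀ p q : List (Finset AP) × List (Finset AP),
      ∃ φ : LTL AP, p ∈ Pos → q ∈ Neg →
        (∀ hp : p.2 ≠ [], sat φ (upWord p.1 p.2 hp)) ∧
        (∀ hq : q.2 ≠ [], ¬ sat φ (upWord q.1 q.2 hq)) ∧
        sizeD φ ≤ S * S + 2 * S + 2 := by
    intro p q
    by_cases hp : p ∈ Pos
    · by_cases hq : q ∈ Neg
      · have hpu : p ∈ Pos ∪ Neg := Finset.mem_union_left _ hp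
        have hqu : q ∈ Pos ∪ Neg := Finset.mem_union_right _ hq
        have hp2 : p.2 ≠ [] := hnn p hpu
        have hq2 : q.2 ≠ [] := hnn q hqu
        obtain ⟨φ, hφ1, hφ2, hφ3⟩ :=
          exists_distinguisher p.1 p.2 q.1 q.2 hp2 hq2 (hsep p hp q hq hp2 hq2)
        refine ⟨φ, fun _ _ => ⟨fun _ => hφ1, fun _ => hφ2, ?_⟩⟩
        have a1 : p.1.length ≤ S := le_trans (Nat.le_add_right _ _) (hterm p hpu)
        have a2 : p.2.length ≤ S := le_trans (Nat.le_add_left _ _) (hterm p hpu)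
        have a3 : q.1.length ≤ S := le_trans (Nat.le_add_right _ _) (hterm q hqu)
        have a4 : q.2.length ≤ S := le_trans (Nat.le_add_left _ _) (hterm q hqu)
        have a5 : p.2.length * q.2.length ≤ S * S := Nat.mul_le_mul a2 a4
        omega
      · exact ⟨ffF AP, fun _ hQ => absurd hQ hq⟩
    · exact ⟨ffF AP, fun hP _ => absurd hP hp⟩
  choose F hF using key
  set Φ : LTL AP :=
    disjList AP (Pos.toList.map (fun p => conjList AP (Neg.toList.map (F p)))) with hΦdef
  refine ⟨Φ, ?_, ?_, ?_⟩
  · intro p hp hp'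
    rw [hΦdef, sat_disjList]
    refine ⟨conjList AP (Neg.toList.map (F p)),
      List.mem_map_of_mem (Finset.mem_toList.mpr hp), ?_⟩
    rw [sat_conjList]
    intro ψ hψ
    obtain ⟨q, hq, rfl⟩ := List.mem_map.mp hψ
    exact (hF p q hp (Finset.mem_toList.mp hq)).1 hp'
  · intro q hq hq'
    rw [hΦdef, sat_disjList]
    rintro ⟨ψ, hψmem, hψsat⟩
    obtain ⟨p, hp, rfl⟩ := List.mem_map.mp hψmem
    rw [sat_conjList] at hψsat
    exact (hF p q (Finset.mem_toList.mp hp) hq).2.1 hq'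
      (hψsat (F p q) (List.mem_map_of_mem (Finset.mem_toList.mpr hq)))
  · -- size bound
    have hcardU : (Pos ∪ Neg).card ≤ S := by
      rw [hS]
      calc (Pos ∪ Neg).card = (Pos ∪ Neg).sum (fun _ => 1) :=
            Finset.card_eq_sum_ones _
        _ ≤ _ := Finset.sum_le_sum (fun i hi => by
            have := List.length_pos_iff.mpr (hnn i hi); omega)
    have hPos : Pos.card ≤ S :=
      le_trans (Finset.card_le_card Finset.subset_union_left) hcardU
    have hNeg : Neg.card ≤ S :=
      le_trans (Finset.card_le_card Finset.subset_union_right) hcardU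
    have inner : ∀ p ∈ Pos,
        sizeD (conjList AP (Neg.toList.map (F p))) ≤ 5 + Neg.card * (S * S + 2 * S + 6) := by
      intro p hp
      refine le_trans (sizeD_conjList_le _) ?_
      have hsum : ((Neg.toList.map (F p)).map (fun φ => sizeD φ + 4)).sum ≤
          Neg.card * (S * S + 2 * S + 6) := by
        have hlen : ((Neg.toList.map (F p)).map (fun φ => sizeD φ + 4)).length = Neg.card := by
          simp [Finset.length_toList]
        calc ((Neg.toList.map (F p)).map (fun φ => sizeD φ + 4)).sum
            ≤ ((Neg.toList.map (F p)).map (fun φ => sizeD φ + 4)).length •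
              (S * S + 2 * S + 6) := by
              refine List.sum_le_card_nsmul _ _ ?_
              intro x hx
              obtain ⟨φ, hφ, rfl⟩ := List.mem_map.mp hx
              obtain ⟨q, hq, rfl⟩ := List.mem_map.mp hφ
              have := (hF _ q hp (Finset.mem_toList.mp hq)).2.2
              omega
          _ = Neg.card * (S * S + 2 * S + 6) := by rw [hlen]; simp [smul_eq_mul]
      omega
    have outer : sizeD Φ ≤ 5 + Pos.card * (5 + Neg.card * (S * S + 2 * S + 6) + 1) := by
      rw [hΦdef]
      refine le_trans (sizeD_disjList_le _) ?_
      have hlen : ((Pos.toList.map (fun p => conjList AP (Neg.toList.map (F p)))).map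
          (fun φ => sizeD φ + 1)).length = Pos.card := by
        simp [Finset.length_toList]
      have hsum : ((Pos.toList.map (fun p => conjList AP (Neg.toList.map (F p)))).map
          (fun φ => sizeD φ + 1)).sum ≤ Pos.card * (5 + Neg.card * (S * S + 2 * S + 6) + 1) := by
        calc _ ≤ ((Pos.toList.map (fun p => conjList AP (Neg.toList.map (F p)))).map
              (fun φ => sizeD φ + 1)).length • (5 + Neg.card * (S * S + 2 * S + 6) + 1) := by
              refine List.sum_le_card_nsmul _ _ ?_
              intro x hx
              obtain ⟨φ, hφ, rfl⟩ := List.mem_map.mp hx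
              obtain ⟨p, hp, rfl⟩ := List.mem_map.mp hφ
              have := inner p (Finset.mem_toList.mp hp)
              omega
          _ = _ := by rw [hlen]; simp [smul_eq_mul]
      omega
    have final : 5 + Pos.card * (5 + Neg.card * (S * S + 2 * S + 6) + 1) ≤ 15 * S ^ 4 + 15 := by
      have b1 : Pos.card * (5 + Neg.card * (S * S + 2 * S + 6) + 1) ≤
          S * (6 + S * (S * S + 2 * S + 6)) := by
        refine Nat.mul_le_mul hPos ?_
        have := Nat.mul_le_mul hNeg (le_refl (S * S + 2 * S + 6))
        omega
      have expand : S * (6 + S * (S * S + 2 * S + 6)) =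
          6 * S + (S ^ 4 + 2 * S ^ 3 + 6 * S ^ 2) := by ring
      rcases Nat.eq_zero_or_pos S with h0 | h1
      · have hp0 : Pos.card = 0 := by omega
        rw [hp0, Nat.zero_mul, Nat.add_zero]
        exact le_trans (by norm_num) (Nat.le_add_left 15 _)
      · have p1 : S ≤ S ^ 4 := by
          calc S = S ^ 1 := (pow_one S).symm
            _ ≤ S ^ 4 := Nat.pow_le_pow_right h1 (by norm_num)
        have p2 : S ^ 2 ≤ S ^ 4 := Nat.pow_le_pow_right h1 (by norm_num)
        have p3 : S ^ 3 ≤ S ^ 4 := Nat.pow_le_pow_right h1 (by norm_num)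
        rw [expand] at b1
        linarith
    omega
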